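/- Let α, β, γ ∈ (0, π/2]. The symmetric 3×3 real matrix [[1, −cos α, −cos β], [−cos α, 1, −cos γ], [−cos β, −cos γ, 1]] is positive semidefinite if and only if α + β + γ ≥ π, and it is positive definite if and only if α + β + γ > π. -/

import Mathlib

open Real

private lemma quad_expand (a b c : ℝ) (x : Fin 3 → ℝ) :
    dotProduct (star x)
        ((!![1, -a, -b; -a, 1, -c; -b, -c, 1] : Matrix (Fin 3) (Fin 3) ℝ).mulVec x)
      = x 0 ^ 2 + x 1 ^ 2 + x 2 ^ 2 - 2*a*x 0*x 1 - 2*b*x 0*x 2 - 2*c*x 1*x 2 := by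
  simp [Matrix.mulVec, dotProduct, Fin.sum_univ_three]
  ring

private lemma herm3 (a b c : ℝ) :
    (!![1, -a, -b; -a, 1, -c; -b, -c, 1] : Matrix (Fin 3) (Fin 3) ℝ).IsHermitian := by
  ext i j
  fin_cases i <;> fin_cases j <;> simp [Matrix.conjTranspose, Matrix.vecHead, Matrix.vecTail]

private lemma psd_iff (a b c : ℝ) (ha0 : 0 ≤ a) (ha1 : a < 1) :
    (!![1, -a, -b; -a, 1, -c; -b, -c, 1] : Matrix (Fin 3) (Fin 3) ℝ).PosSemidef
      ↔ 0 ≤ 1 - a^2 - b^2 - c^2 - 2*a*b*c := by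
  constructor
  · intro hP; obtain ⟨-, h⟩ := Matrix.posSemidef_iff_dotProduct_mulVec.mp hP
    have h1 := h ![b + a*c, c + a*b, 1 - a^2]
    rw [quad_expand] at h1
    simp only [Matrix.cons_val_zero, Matrix.cons_val_one, Matrix.head_cons,
      Matrix.cons_val_two, Matrix.tail_cons] at h1
    have h2 : 0 ≤ (1 - a^2) * (1 - a^2 - b^2 - c^2 - 2*a*b*c) := by nlinarith [h1]
    by_contra hlt
    push_neg at hlt
    have := mul_neg_of_pos_of_neg (by nlinarith : (0:ℝ) < 1 - a^2) hlt
    linarith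
  · intro hD
    refine Matrix.posSemidef_iff_dotProduct_mulVec.mpr ⟨herm3 a b c, fun x => ?_⟩
    rw [quad_expand]
    have h2 : 0 ≤ (1 - a^2) * (x 0 ^ 2 + x 1 ^ 2 + x 2 ^ 2 - 2*a*x 0*x 1 - 2*b*x 0*x 2
        - 2*c*x 1*x 2) := by
      have key : (1 - a^2) * (x 0 ^ 2 + x 1 ^ 2 + x 2 ^ 2 - 2*a*x 0*x 1 - 2*b*x 0*x 2
          - 2*c*x 1*x 2)
          = (1 - a^2) * (x 0 - a * x 1 - b * x 2)^2 + ((1 - a^2) * x 1 - (c + a*b) * x 2)^2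
            + (1 - a^2 - b^2 - c^2 - 2*a*b*c) * x 2 ^ 2 := by ring
      rw [key]
      have h3 : (0:ℝ) < 1 - a^2 := by nlinarith
      positivity
    by_contra hlt
    push_neg at hlt
    have := mul_neg_of_pos_of_neg (by nlinarith : (0:ℝ) < 1 - a^2) hlt
    linarith

private lemma pd_iff (a b c : ℝ) (ha0 : 0 ≤ a) (ha1 : a < 1) :
    (!![1, -a, -b; -a, 1, -c; -b, -c, 1] : Matrix (Fin 3) (Fin 3) ℝ).PosDef
      ↔ 0 < 1 - a^2 - b^2 - c^2 - 2*a*b*c := by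
  have ha2 : (0:ℝ) < 1 - a^2 := by nlinarith
  constructor
  · intro hP; obtain ⟨-, h⟩ := Matrix.posDef_iff_dotProduct_mulVec.mp hP
    have hx : (![b + a*c, c + a*b, 1 - a^2] : Fin 3 → ℝ) ≠ 0 := by
      intro h0
      have := congrFun h0 2
      simp at this
      nlinarith
    have h1 := h hx
    rw [quad_expand] at h1
    simp only [Matrix.cons_val_zero, Matrix.cons_val_one, Matrix.head_cons,
      Matrix.cons_val_two, Matrix.tail_cons] at h1
    have h2 : 0 < (1 - a^2) * (1 - a^2 - b^2 - c^2 - 2*a*b*c) := by nlinarith [h1]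
    by_contra hle
    push_neg at hle
    have := mul_nonpos_of_nonneg_of_nonpos (le_of_lt ha2) hle
    linarith
  · intro hD
    refine Matrix.posDef_iff_dotProduct_mulVec.mpr ⟨herm3 a b c, fun x hx => ?_⟩
    rw [quad_expand]
    have key : (1 - a^2) * (x 0 ^ 2 + x 1 ^ 2 + x 2 ^ 2 - 2*a*x 0*x 1 - 2*b*x 0*x 2 - 2*c*x 1*x 2)
        = (1 - a^2) * (x 0 - a * x 1 - b * x 2)^2 + ((1 - a^2) * x 1 - (c + a*b) * x 2)^2
          + (1 - a^2 - b^2 - c^2 - 2*a*b*c) * x 2 ^ 2 := by ring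
    rcases eq_or_ne (x 2) 0 with h2 | h2
    · rcases eq_or_ne (x 1) 0 with h1 | h1
      · have h0 : x 0 ≠ 0 := by
          intro h0
          apply hx
          funext i
          fin_cases i <;> simp [h0, h1, h2]
        rw [h1, h2]
        nlinarith [sq_pos_of_ne_zero h0]
      · rw [h2]
        nlinarith [sq_pos_of_ne_zero h1, sq_nonneg (x 0 - a * x 1)]
    · nlinarith [sq_pos_of_ne_zero h2, sq_nonneg (x 0 - a * x 1 - b * x 2),
        sq_nonneg ((1 - a^2) * x 1 - (c + a*b) * x 2)]

private lemma det_identity (α β γ : ℝ) :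
    1 - Real.cos α^2 - Real.cos β^2 - Real.cos γ^2 - 2*Real.cos α*Real.cos β*Real.cos γ
      = -((Real.cos γ + Real.cos (α+β)) * (Real.cos γ + Real.cos (α-β))) := by
  rw [Real.cos_add, Real.cos_sub]
  linear_combination (Real.cos β^2 - 1) * Real.sin_sq_add_cos_sq α
    + (- Real.sin α^2) * Real.sin_sq_add_cos_sq β

theorem gram_matrix_posSemidef_iff_angle_sum (α β γ : ℝ)
    (hα : α ∈ Set.Ioc 0 (π / 2)) (hβ : β ∈ Set.Ioc 0 (π / 2))
    (hγ : γ ∈ Set.Ioc 0 (π / 2)) :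
    ((!![1, -Real.cos α, -Real.cos β;
         -Real.cos α, 1, -Real.cos γ;
         -Real.cos β, -Real.cos γ, 1] : Matrix (Fin 3) (Fin 3) ℝ).PosSemidef
      ↔ π ≤ α + β + γ) ∧
    ((!![1, -Real.cos α, -Real.cos β;
         -Real.cos α, 1, -Real.cos γ;
         -Real.cos β, -Real.cos γ, 1] : Matrix (Fin 3) (Fin 3) ℝ).PosDef
      ↔ π < α + β + γ) := by
  obtain ⟨hα1, hα2⟩ := hα
  obtain ⟨hβ1, hβ2⟩ := hβ
  obtain ⟨hγ1, hγ2⟩ := hγ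
  have hπ := Real.pi_pos
  have ha0 : 0 ≤ Real.cos α := Real.cos_nonneg_of_mem_Icc ⟨by linarith, hα2⟩
  have hc0 : 0 ≤ Real.cos γ := Real.cos_nonneg_of_mem_Icc ⟨by linarith, hγ2⟩
  have ha1 : Real.cos α < 1 := by
    have := Real.strictAntiOn_cos (Set.left_mem_Icc.mpr hπ.le) ⟨hα1.le, by linarith⟩ hα1
    simpa using this
  have hdet := det_identity α β γ
  have hS2 : 0 < Real.cos γ + Real.cos (α - β) := by
    have := Real.cos_pos_of_mem_Ioo (x := α - β) ⟨by linarith, by linarith⟩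
    linarith
  have hmem1 : α + β ∈ Set.Icc 0 π := ⟨by linarith, by linarith⟩
  have hmem2 : π - γ ∈ Set.Icc 0 π := ⟨by linarith, by linarith⟩
  constructor
  · rw [psd_iff _ _ _ ha0 ha1]
    rw [hdet]
    constructor
    · intro h
      have hS1 : Real.cos (α+β) ≤ Real.cos (π - γ) := by
        rw [Real.cos_pi_sub]
        nlinarith
      have := (Real.strictAntiOn_cos.le_iff_ge hmem1 hmem2).mp hS1
      linarith
    · intro h
      have h2 : π - γ ≤ α + β := by linarith
      have h3 := (Real.strictAntiOn_cos.le_iff_ge hmem1 hmem2).mpr h2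
      rw [Real.cos_pi_sub] at h3
      nlinarith
  · rw [pd_iff _ _ _ ha0 ha1]
    rw [hdet]
    constructor
    · intro h
      have hS1 : Real.cos (α+β) < Real.cos (π - γ) := by
        rw [Real.cos_pi_sub]
        nlinarith
      have := (Real.strictAntiOn_cos.lt_iff_gt hmem1 hmem2).mp hS1
      linarith
    · intro h
      have h2 : π - γ < α + β := by linarith
      have h3 := (Real.strictAntiOn_cos.lt_iff_gt hmem1 hmem2).mpr h2
      rw [Real.cos_pi_sub] at h3
      nlinarith
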